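/- Let g₁ ≠ g₂ be vertices of G and h₁ ≠ h₂ be vertices of H. Then (g₂,h₂) does not lie in the geodetic closure I[{(g₁,h₁),(g₁,h₂),(g₂,h₁)}] in G ⊠ H. -/

import Mathlib

open SimpleGraph

/-- The strong product of two simple graphs. -/
def strongProd {α β : Type*} (G : SimpleGraph α) (H : SimpleGraph β) :
    SimpleGraph (α × β) where
  Adj x y := x ≠ y ∧ (x.1 = y.1 ∨ G.Adj x.1 y.1) ∧ (x.2 = y.2 ∨ H.Adj x.2 y.2)
  symm := by
    constructor; rintro x y ⟨hne, h1, h2⟩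
    exact ⟨hne.symm, h1.imp Eq.symm G.adj_symm, h2.imp Eq.symm H.adj_symm⟩
  loopless := by constructor; rintro x ⟨hne, -, -⟩; exact hne rfl

/-- The closed geodesic interval between two vertices. -/
def interval {V : Type*} (G : SimpleGraph V) (u v : V) : Set V :=
  {w | G.dist u w + G.dist w v = G.dist u v}

/-- The geodetic closure of a set of vertices. -/
def intervalSet {V : Type*} (G : SimpleGraph V) (S : Set V) : Set V :=
  ⋃ u ∈ S, ⋃ v ∈ S, interval G u v

/-- A set is geodetic if its geodetic closure is the whole vertex set. -/
def IsGeodetic {V : Type*} (G : SimpleGraph V) (S : Set V) : Prop :=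
  intervalSet G S = Set.univ

/-- A set is a hull set if iterating the interval operator yields everything. -/
def IsHullSet {V : Type*} (G : SimpleGraph V) (S : Set V) : Prop :=
  ∃ r : ℕ, (intervalSet G)^[r] S = Set.univ

/-- The geodetic number. -/
noncomputable def geodeticNumber {V : Type*} (G : SimpleGraph V) : ℕ :=
  sInf {n : ℕ | ∃ S : Set V, S.ncard = n ∧ IsGeodetic G S}

/-- The hull number. -/
noncomputable def hullNumber {V : Type*} (G : SimpleGraph V) : ℕ :=
  sInf {n : ℕ | ∃ S : Set V, S.ncard = n ∧ IsHullSet G S}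

/-- A vertex is simplicial if its neighborhood induces a complete graph. -/
def IsSimplicial {V : Type*} (G : SimpleGraph V) (v : V) : Prop :=
  ∀ ⦃a b : V⦄, G.Adj v a → G.Adj v b → a ≠ b → G.Adj a b

section Aux
open SimpleGraph

variable {α β : Type*} {G : SimpleGraph α} {H : SimpleGraph β}

lemma strongProd_adj_left {g g' : α} (a : G.Adj g g') (h : β) :
    (strongProd G H).Adj (g, h) (g', h) :=
  ⟨fun he => a.ne (congrArg Prod.fst he), Or.inr a, Or.inl rfl⟩

lemma strongProd_adj_right {h h' : β} (a : H.Adj h h') (g : α) :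
    (strongProd G H).Adj (g, h) (g, h') :=
  ⟨fun he => a.ne (congrArg Prod.snd he), Or.inl rfl, Or.inr a⟩

lemma strongProd_adj_both {g g' : α} {h h' : β} (a : G.Adj g g') (b : H.Adj h h') :
    (strongProd G H).Adj (g, h) (g', h') :=
  ⟨fun he => a.ne (congrArg Prod.fst he), Or.inr a, Or.inr b⟩

lemma strongProd_lift_left {g g' : α} (h : β) (p : G.Walk g g') :
    ∃ q : (strongProd G H).Walk (g, h) (g', h), q.length = p.length := by
  induction p with
  | nil => exact ⟨.nil, rfl⟩
  | cons a p ih =>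
    obtain ⟨q, hq⟩ := ih
    exact ⟨.cons (strongProd_adj_left a h) q, by simp [hq]⟩

lemma strongProd_lift_right {h h' : β} (g : α) (p : H.Walk h h') :
    ∃ q : (strongProd G H).Walk (g, h) (g, h'), q.length = p.length := by
  induction p with
  | nil => exact ⟨.nil, rfl⟩
  | cons a p ih =>
    obtain ⟨q, hq⟩ := ih
    exact ⟨.cons (strongProd_adj_right a g) q, by simp [hq]⟩

lemma strongProd_walk_max {g g' : α} {h h' : β} (p : G.Walk g g') (q : H.Walk h h') :
    ∃ r : (strongProd G H).Walk (g, h) (g', h'), r.length = max p.length q.length := by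
  induction p generalizing h with
  | nil =>
    obtain ⟨r, hr⟩ := strongProd_lift_right (G := G) _ q
    exact ⟨r, by simp [hr]⟩
  | cons a p ih =>
    cases q with
    | nil =>
      obtain ⟨r, hr⟩ := strongProd_lift_left (H := H) _ (SimpleGraph.Walk.cons a p)
      exact ⟨r, by simp [hr]⟩
    | cons b q =>
      obtain ⟨r, hr⟩ := ih q
      exact ⟨.cons (strongProd_adj_both a b) r, by simp [hr, Nat.succ_max_succ]⟩

lemma strongProd_proj_left {x y : α × β} (p : (strongProd G H).Walk x y) :
    ∃ q : G.Walk x.1 y.1, q.length ≤ p.length := by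
  induction p with
  | nil => exact ⟨.nil, le_rfl⟩
  | cons a p ih =>
    obtain ⟨q, hq⟩ := ih
    rcases a.2.1 with he | ha
    · exact ⟨q.copy he.symm rfl, by simpa using hq.trans (Nat.le_succ _)⟩
    · exact ⟨.cons ha q, by simpa using hq⟩

lemma strongProd_proj_right {x y : α × β} (p : (strongProd G H).Walk x y) :
    ∃ q : H.Walk x.2 y.2, q.length ≤ p.length := by
  induction p with
  | nil => exact ⟨.nil, le_rfl⟩
  | cons a p ih =>
    obtain ⟨q, hq⟩ := ih
    rcases a.2.2 with he | ha
    · exact ⟨q.copy he.symm rfl, by simpa using hq.trans (Nat.le_succ _)⟩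
    · exact ⟨.cons ha q, by simpa using hq⟩

lemma strongProd_dist {g g' : α} {h h' : β} (hg : G.Reachable g g') (hh : H.Reachable h h') :
    (strongProd G H).dist (g, h) (g', h') = max (G.dist g g') (H.dist h h') := by
  obtain ⟨p, hp⟩ := hg.exists_walk_length_eq_dist
  obtain ⟨q, hq⟩ := hh.exists_walk_length_eq_dist
  obtain ⟨r, hr⟩ := strongProd_walk_max (H := H) p q
  refine le_antisymm (by rw [← hp, ← hq, ← hr]; exact SimpleGraph.dist_le r) ?_
  have hreach : (strongProd G H).Reachable (g, h) (g', h') := ⟨r⟩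
  obtain ⟨P, hP⟩ := hreach.exists_walk_length_eq_dist
  obtain ⟨qa, hqa⟩ := strongProd_proj_left P
  obtain ⟨qb, hqb⟩ := strongProd_proj_right P
  refine max_le ?_ ?_
  · exact (SimpleGraph.dist_le qa).trans (hqa.trans hP.le)
  · exact (SimpleGraph.dist_le qb).trans (hqb.trans hP.le)

end Aux

theorem strongProd_not_mem_closure_of_three {α β : Type*} [Fintype α] [Fintype β]
    (G : SimpleGraph α) (H : SimpleGraph β) (hG : G.Connected) (hH : H.Connected)
    (g₁ g₂ : α) (h₁ h₂ : β) (hg : g₁ ≠ g₂) (hh : h₁ ≠ h₂) :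
    (g₂, h₂) ∉ intervalSet (strongProd G H) {(g₁, h₁), (g₁, h₂), (g₂, h₁)} := by
  have pG := hG.preconnected
  have pH := hH.preconnected
  have key : ∀ (x y : α) (u v : β),
      (strongProd G H).dist (x, u) (y, v) = max (G.dist x y) (H.dist u v) :=
    fun x y u v => strongProd_dist (pG x y) (pH u v)
  have ha : 0 < G.dist g₁ g₂ := hG.pos_dist_of_ne hg
  have hb : 0 < H.dist h₁ h₂ := hH.pos_dist_of_ne hh
  have hc : G.dist g₂ g₁ = G.dist g₁ g₂ := G.dist_comm
  have hd : H.dist h₂ h₁ = H.dist h₁ h₂ := H.dist_comm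
  intro hmem
  simp only [intervalSet, interval, Set.mem_iUnion, Set.mem_insert_iff,
    Set.mem_singleton_iff, Set.mem_setOf_eq] at hmem
  obtain ⟨u, hu, v, hv, heq⟩ := hmem
  rcases hu with rfl | rfl | rfl <;> rcases hv with rfl | rfl | rfl <;>
    simp only [key, SimpleGraph.dist_self, Nat.max_self, Nat.max_zero, Nat.zero_max,
      hc, hd] at heq <;>
    omega
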